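/- Let 𝒜 be a finite alphabet with d ≥ 2 symbols, let π = (π₀, π₁) be an irreducible combinatorial data on 𝒜, let ε ∈ {0,1}, and let π' = r_ε(π). Then Θ_{π,ε} Ω_π = Ω_{π'} (Θ_{π,ε}ᵀ)⁻¹; equivalently, Θ_{π,ε} Ω_π Θ_{π,ε}ᵀ = Ω_{π'}. -/

import Mathlib

open Matrix

/-- The top element of `Fin d` (corresponding to the value `d` in `{1, …, d}`). -/
def finTop (d : ℕ) (hd : 0 < d) : Fin d := ⟨d - 1, by omega⟩

/-- The matrix `Ω_π` associated to the combinatorial data `π = (p0, p1)`. -/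
def rvOmega {A : Type*} [Fintype A] (d : ℕ) (p0 p1 : A ≃ Fin d) :
    Matrix A A ℝ :=
  Matrix.of fun α β =>
    if p1 β < p1 α ∧ p0 α < p0 β then (1 : ℝ)
    else if p1 α < p1 β ∧ p0 β < p0 α then -1
    else 0

/-- The combinatorial data `π = (p0, p1)` is irreducible. -/
def rvIrreducible {A : Type*} (d : ℕ) (p0 p1 : A ≃ Fin d) : Prop :=
  ∀ j : ℕ, 1 ≤ j → j ≤ d - 1 →
    {α : A | (p0 α : ℕ) < j} ≠ {α : A | (p1 α : ℕ) < j}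

/-- The Rauzy–Veech update of the loser-side permutation; `e = π_ε` (winner side),
`f = π_{1−ε}` (the side being updated). -/
def rvUpdate {A : Type*} (d : ℕ) (hd : 0 < d) (e f : A ≃ Fin d) (α : A) : Fin d :=
  haveI : NeZero d := ⟨hd.ne'⟩
  if f α ≤ f (e.symm (finTop d hd)) then f α
  else if f α < finTop d hd then f α + 1
  else f (e.symm (finTop d hd)) + 1

/-- The Rauzy–Veech matrix `Θ_{π,ε} = I + E_{α(1−ε), α(ε)}`, where `e = π_ε` and
`f = π_{1−ε}`, so that `α(ε) = e⁻¹(d)` is the winner and `α(1−ε) = f⁻¹(d)` is the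
loser. -/
def rvTheta {A : Type*} [Fintype A] [DecidableEq A] (d : ℕ) (hd : 0 < d)
    (e f : A ≃ Fin d) : Matrix A A ℝ :=
  1 + Matrix.single (f.symm (finTop d hd)) (e.symm (finTop d hd)) 1

-- helpers
lemma fin_val_add_one {d : ℕ} [NeZero d] (a : Fin d) (h : (a : ℕ) + 1 < d) :
    ((a + 1 : Fin d) : ℕ) = (a : ℕ) + 1 := by
  rw [Fin.add_def]
  have h1 : ((1 : Fin d) : ℕ) = 1 := by
    rw [Fin.val_one']; exact Nat.mod_eq_of_lt (by omega)
  rw [h1]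
  exact Nat.mod_eq_of_lt h

lemma stdBasis_transpose {A : Type*} [DecidableEq A] (l w : A) (c : ℝ) :
    (Matrix.single l w c)ᵀ = Matrix.single w l c := by
  ext a b
  simp [Matrix.single, and_comm]

lemma conj_apply {A : Type*} [Fintype A] [DecidableEq A] (l w : A)
    (M : Matrix A A ℝ) (α β : A) :
    (((1 + Matrix.single l w (1:ℝ)) * M * (1 + Matrix.single l w 1)ᵀ : Matrix A A ℝ)) α β =
      M α β + (if α = l then M w β else 0) + (if β = l then M α w else 0) +
        (if α = l then (if β = l then M w w else 0) else 0) := by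
  have hE : ∀ (N : Matrix A A ℝ) x y,
      ((Matrix.single l w (1:ℝ) * N : Matrix A A ℝ)) x y = if x = l then N w y else 0 := by
    intro N x y
    by_cases h : x = l
    · subst h; simp
    · simp [h, Matrix.single_mul_apply_of_ne (h := h)]
  have hEt : ∀ (N : Matrix A A ℝ) x y,
      ((N * (Matrix.single l w (1:ℝ))ᵀ : Matrix A A ℝ)) x y = if y = l then N x w else 0 := by
    intro N x y
    rw [stdBasis_transpose]
    by_cases h : y = l
    · subst h; simp
    · simp [h, Matrix.mul_single_apply_of_ne (hbj := h)]
  rw [Matrix.transpose_add, Matrix.transpose_one, add_mul, one_mul, mul_add, mul_one]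
  simp only [Matrix.add_apply, hE, hEt]
  by_cases hα : α = l <;> by_cases hβ : β = l <;> simp [hα, hβ] <;> ring

lemma rv_hv {A : Type*} [Fintype A] [DecidableEq A] (d : ℕ) (hd : 2 ≤ d)
    (e f f' : A ≃ Fin d) (h1 : 0 < d)
    (hlw : f.symm (finTop d h1) ≠ e.symm (finTop d h1))
    (hupd : ∀ α, f' α = rvUpdate d h1 e f α) (γ : A) :
    (f' γ : ℕ) = if γ = f.symm (finTop d h1) then (f (e.symm (finTop d h1)) : ℕ) + 1
      else if (f γ : ℕ) ≤ (f (e.symm (finTop d h1)) : ℕ) then (f γ : ℕ)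
      else (f γ : ℕ) + 1 := by
  haveI : NeZero d := ⟨h1.ne'⟩
  set l := f.symm (finTop d h1) with hl
  set w := e.symm (finTop d h1) with hw
  have hfl : (f l : ℕ) = d - 1 := by rw [hl]; simp [finTop]
  have key : ∀ x : A, (f x : ℕ) = d - 1 → x = l := by
    intro x h
    have hx : f x = finTop d h1 := Fin.ext (by simpa [finTop] using h)
    rw [hl, ← hx, Equiv.symm_apply_apply]
  have hk : (f w : ℕ) < d - 1 := by
    have h2 : (f w : ℕ) < d := (f w).isLt
    rcases Nat.lt_or_ge (f w : ℕ) (d - 1) with h | h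
    · exact h
    · exact absurd (key w (by omega)) (fun hh => hlw (hh ▸ rfl))
  have hγlt : γ ≠ l → (f γ : ℕ) < d - 1 := by
    intro h
    have h2 : (f γ : ℕ) < d := (f γ).isLt
    have h3 : (f γ : ℕ) ≠ d - 1 := fun hh => h (key γ hh)
    omega
  rw [hupd]
  simp only [rvUpdate, ← hl, ← hw]
  by_cases hγ : γ = l
  · subst hγ
    rw [if_pos rfl, if_neg (by rw [Fin.le_def]; omega),
      if_neg (by rw [Fin.lt_def]; simp [finTop]; omega)]
    exact fin_val_add_one _ (by omega)
  · have h4 := hγlt hγ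
    rw [if_neg hγ]
    by_cases h2 : f γ ≤ f w
    · rw [if_pos h2, if_pos (Fin.le_def.mp h2)]
    · rw [if_neg h2, if_neg (fun h => h2 (Fin.le_def.mpr h)),
        if_pos (by rw [Fin.lt_def]; simp [finTop]; omega)]
      exact fin_val_add_one _ (by omega)

set_option maxHeartbeats 2000000 in
lemma rv_core {A : Type*} [Fintype A] [DecidableEq A] (d : ℕ) (hd : 2 ≤ d)
    (e f f' : A ≃ Fin d) (h1 : 0 < d)
    (hlw : f.symm (finTop d h1) ≠ e.symm (finTop d h1))
    (hupd : ∀ α, f' α = rvUpdate d h1 e f α) :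
    rvTheta d h1 e f * rvOmega d e f * (rvTheta d h1 e f)ᵀ = rvOmega d e f' := by
  haveI : NeZero d := ⟨h1.ne'⟩
  have hv := rv_hv d hd e f f' h1 hlw hupd
  set l := f.symm (finTop d h1) with hl
  set w := e.symm (finTop d h1) with hw
  have hfl : (f l : ℕ) = d - 1 := by rw [hl]; simp [finTop]
  have hew : (e w : ℕ) = d - 1 := by rw [hw]; simp [finTop]
  have keyf : ∀ x : A, (f x : ℕ) = d - 1 → x = l := by
    intro x h
    have hx : f x = finTop d h1 := Fin.ext (by simpa [finTop] using h)
    rw [hl, ← hx, Equiv.symm_apply_apply]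
  have keye : ∀ x : A, (e x : ℕ) = d - 1 → x = w := by
    intro x h
    have hx : e x = finTop d h1 := Fin.ext (by simpa [finTop] using h)
    rw [hw, ← hx, Equiv.symm_apply_apply]
  have hk : (f w : ℕ) < d - 1 := by
    have h2 : (f w : ℕ) < d := (f w).isLt
    rcases Nat.lt_or_ge (f w : ℕ) (d - 1) with h | h
    · exact h
    · exact absurd (keyf w (by omega)) (fun hh => hlw (hh ▸ rfl))
  have hel : (e l : ℕ) < d - 1 := by
    have h2 : (e l : ℕ) < d := (e l).isLt
    rcases Nat.lt_or_ge (e l : ℕ) (d - 1) with h | h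
    · exact h
    · exact absurd (keye l (by omega)) hlw
  ext α β
  rw [rvTheta, conj_apply]
  simp only [← hl, ← hw] at hv ⊢
  have hflt : ∀ x : A, x ≠ l → (f x : ℕ) < d - 1 := by
    intro x h
    have h2 : (f x : ℕ) < d := (f x).isLt
    have h3 : (f x : ℕ) ≠ d - 1 := fun hh => h (keyf x hh)
    omega
  have helt : ∀ x : A, x ≠ w → (e x : ℕ) < d - 1 := by
    intro x h
    have h2 : (e x : ℕ) < d := (e x).isLt
    have h3 : (e x : ℕ) ≠ d - 1 := fun hh => h (keye x hh)
    omega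
  have hfinj : ∀ x y : A, x ≠ y → (f x : ℕ) ≠ (f y : ℕ) := by
    intro x y h hh
    exact h (f.injective (Fin.ext hh))
  have heinj : ∀ x y : A, x ≠ y → (e x : ℕ) ≠ (e y : ℕ) := by
    intro x y h hh
    exact h (e.injective (Fin.ext hh))
  simp only [rvOmega, Matrix.of_apply, Fin.lt_def, hv]
  by_cases hα : α = l <;> by_cases hβ : β = l
  · subst hα; subst hβ
    have h1' := hel
    simp only [if_pos rfl]
    split_ifs <;> first | omega | norm_num
  · subst hα
    have h2 := hflt β hβ
    have h3 := heinj β l hβ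
    have h4 := heinj l β (Ne.symm hβ)
    simp only [if_pos rfl, if_neg hβ]
    by_cases hβw : β = w
    · subst hβw
      have h9 := helt l hlw
      split_ifs <;> first | omega | norm_num
    · have h9 := helt β hβw
      have h10 := helt l hlw
      split_ifs <;> first | omega | norm_num
  · subst hβ
    have h2 := hflt α hα
    have h3 := heinj α l hα
    have h4 := heinj l α (Ne.symm hα)
    simp only [if_pos rfl, if_neg hα]
    by_cases hαw : α = w
    · subst hαw
      have h9 := helt l hlw
      split_ifs <;> first | omega | norm_num
    · have h9 := helt α hαw
      have h10 := helt l hlw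
      split_ifs <;> first | omega | norm_num
  · have h2 := hflt α hα
    have h3 := hflt β hβ
    simp only [if_neg hα, if_neg hβ]
    have horder : ∀ x y : A, (f x : ℕ) < d - 1 → (f y : ℕ) < d - 1 →
        (((if (f x : ℕ) ≤ (f w : ℕ) then (f x : ℕ) else (f x : ℕ) + 1) <
          (if (f y : ℕ) ≤ (f w : ℕ) then (f y : ℕ) else (f y : ℕ) + 1)) ↔
          (f x : ℕ) < (f y : ℕ)) := by
      intro x y hx hy
      split_ifs <;> omega
    simp only [horder β α h3 h2, horder α β h2 h3]
    by_cases hab : α = β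
    · subst hab
      split_ifs <;> first | omega | norm_num
    · have h5 := hfinj α β hab
      have h6 := hfinj β α (Ne.symm hab)
      have h7 := heinj α β hab
      have h8 := heinj β α (Ne.symm hab)
      by_cases hαw : α = w <;> by_cases hβw : β = w
      · exact absurd (hαw.trans hβw.symm) hab
      · subst hαw
        have h10 := helt β hβw
        split_ifs <;> first | omega | norm_num
      · subst hβw
        have h9 := helt α hαw
        split_ifs <;> first | omega | norm_num
      · have h9 := helt α hαw
        have h10 := helt β hβw
        split_ifs <;> first | omega | norm_num

lemma rvOmega_swap {A : Type*} [Fintype A] (d : ℕ) (p0 p1 : A ≃ Fin d) :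
    rvOmega d p1 p0 = - rvOmega d p0 p1 := by
  ext α β
  simp only [rvOmega, Matrix.of_apply, Matrix.neg_apply, Fin.lt_def]
  split_ifs <;> first | omega | norm_num

lemma rv_first {A : Type*} [Fintype A] [DecidableEq A] (d : ℕ) (h1 : 0 < d)
    (e f : A ≃ Fin d)
    (hlw : f.symm (finTop d h1) ≠ e.symm (finTop d h1))
    (Ω Ω' : Matrix A A ℝ)
    (h2 : rvTheta d h1 e f * Ω * (rvTheta d h1 e f)ᵀ = Ω') :
    rvTheta d h1 e f * Ω = Ω' * ((rvTheta d h1 e f)ᵀ)⁻¹ := by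
  set l := f.symm (finTop d h1) with hl
  set w := e.symm (finTop d h1) with hw
  have hT : (rvTheta d h1 e f)ᵀ = 1 + Matrix.single w l 1 := by
    rw [rvTheta, Matrix.transpose_add, Matrix.transpose_one, stdBasis_transpose]
  have hEE : Matrix.single w l (1:ℝ) * Matrix.single w l 1 = 0 :=
    Matrix.single_mul_single_of_ne (i := w) (j := l) (k := w) (h := hlw) (c := 1) (d := 1)
  have hmul : (1 + Matrix.single w l (1:ℝ)) * (1 - Matrix.single w l 1) = 1 := by
    rw [mul_sub, mul_one, add_mul, one_mul, hEE, add_zero]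
    abel
  have hinv : ((rvTheta d h1 e f)ᵀ)⁻¹ = 1 - Matrix.single w l 1 := by
    rw [hT]; exact Matrix.inv_eq_right_inv hmul
  rw [hinv, ← h2, Matrix.mul_assoc (rvTheta d h1 e f * Ω), hT, hmul, mul_one]

lemma rv_irr_ne {A : Type*} [Fintype A] [DecidableEq A] (d : ℕ) (hd : 2 ≤ d)
    (h1 : 0 < d) (p0 p1 : A ≃ Fin d) (hirr : rvIrreducible d p0 p1) :
    p0.symm (finTop d h1) ≠ p1.symm (finTop d h1) := by
  intro hEq
  apply hirr (d - 1) (by omega) le_rfl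
  have key : ∀ (g : A ≃ Fin d) (x : A), (g x : ℕ) < d - 1 ↔ x ≠ g.symm (finTop d h1) := by
    intro g x
    constructor
    · intro h hx
      rw [hx] at h
      simp only [Equiv.apply_symm_apply, finTop] at h
      omega
    · intro h
      have h2 : (g x : ℕ) < d := (g x).isLt
      have h3 : (g x : ℕ) ≠ d - 1 := by
        intro hh
        apply h
        have : g x = finTop d h1 := Fin.ext (by simpa [finTop] using hh)
        rw [← this, Equiv.symm_apply_apply]
      omega
  ext x
  simp only [Set.mem_setOf_eq, key, hEq]


/-- Let `π` be an irreducible combinatorial data on an alphabet with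
`d ≥ 2` symbols, `ε ∈ {0,1}` and `π' = r_ε(π)`.  Then
`Θ_{π,ε} Ω_π = Ω_{π'} (Θ_{π,ε}ᵀ)⁻¹`; equivalently `Θ_{π,ε} Ω_π Θ_{π,ε}ᵀ = Ω_{π'}`.
Here `π ε` is `π_ε` (with `false ↔ 0`, `true ↔ 1`). -/
theorem stmt16 {A : Type*} [Fintype A] [DecidableEq A] (d : ℕ) (hd : 2 ≤ d)
    (hcard : Fintype.card A = d) (π π' : Bool → A ≃ Fin d) (ε : Bool)
    (hirr : rvIrreducible d (π false) (π true))
    (hkeep : π' ε = π ε)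
    (hupd : ∀ α, (π' (!ε)) α = rvUpdate d (by omega) (π ε) (π (!ε)) α) :
    rvTheta d (by omega) (π ε) (π (!ε)) * rvOmega d (π false) (π true) =
        rvOmega d (π' false) (π' true) *
          ((rvTheta d (by omega) (π ε) (π (!ε)))ᵀ)⁻¹ ∧
      rvTheta d (by omega) (π ε) (π (!ε)) * rvOmega d (π false) (π true) *
          (rvTheta d (by omega) (π ε) (π (!ε)))ᵀ =
        rvOmega d (π' false) (π' true) := by
  have h1 : 0 < d := by omega
  have hne := rv_irr_ne d hd h1 (π false) (π true) hirr
  cases ε with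
  | false =>
    have hsec : rvTheta d h1 (π false) (π true) * rvOmega d (π false) (π true) *
        (rvTheta d h1 (π false) (π true))ᵀ = rvOmega d (π' false) (π' true) := by
      have hcore := rv_core d hd (π false) (π true) (π' true) h1 (Ne.symm hne) hupd
      rw [hkeep]
      exact hcore
    exact ⟨rv_first d h1 (π false) (π true) (Ne.symm hne) _ _ hsec, hsec⟩
  | true =>
    have hsec : rvTheta d h1 (π true) (π false) * rvOmega d (π false) (π true) *
        (rvTheta d h1 (π true) (π false))ᵀ = rvOmega d (π' false) (π' true) := by
      have hcore := rv_core d hd (π true) (π false) (π' false) h1 hne hupd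
      rw [hkeep, rvOmega_swap d (π true) (π false), rvOmega_swap d (π true) (π' false),
        mul_neg, neg_mul, hcore]
    exact ⟨rv_first d h1 (π true) (π false) hne _ _ hsec, hsec⟩
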